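/- Let ψ be a normalized free N-partite state and let k ∈ supp(ψ). Then the standard basis state e_k (defined by e_k(j) = 1 if j = k and e_k(j) = 0 otherwise) lies in the closure of the SLOCC cone of ψ. -/

import Mathlib

open scoped BigOperators

/-- A state is free if any two distinct elements of its support differ in at least
two coordinates. -/
def IsFree {N : ℕ} {d : Fin N → ℕ} (ψ : (∀ i, Fin (d i)) → ℂ) : Prop :=
  ∀ j k : ∀ i, Fin (d i), ψ j ≠ 0 → ψ k ≠ 0 → j ≠ k →
    ∃ i₁ i₂ : Fin N, i₁ ≠ i₂ ∧ j i₁ ≠ k i₁ ∧ j i₂ ≠ k i₂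

/-- The Kronecker/tensor product action of a tuple of local special linear matrices. -/
noncomputable def sloccAct {N : ℕ} {d : Fin N → ℕ}
    (g : ∀ i, Matrix.SpecialLinearGroup (Fin (d i)) ℂ)
    (ψ : (∀ i, Fin (d i)) → ℂ) : (∀ i, Fin (d i)) → ℂ :=
  fun j => ∑ m : ∀ i, Fin (d i),
    (∏ i, (g i : Matrix (Fin (d i)) (Fin (d i)) ℂ) (j i) (m i)) * ψ m

/-- The SLOCC cone of a state `ψ`. -/
def sloccCone {N : ℕ} {d : Fin N → ℕ} (ψ : (∀ i, Fin (d i)) → ℂ) :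
    Set ((∀ i, Fin (d i)) → ℂ) :=
  {φ | ∃ (c : ℂ) (g : ∀ i, Matrix.SpecialLinearGroup (Fin (d i)) ℂ),
    φ = c • sloccAct g ψ}

lemma aux_mem {N : ℕ} {d : Fin N → ℕ}
    (ψ : (∀ i, Fin (d i)) → ℂ) (k : ∀ i, Fin (d i))
    (ε : ℂ) (hε : ε ≠ 0) :
    (fun j => ε ^ (∑ i, if j i = k i then 0 else d i) * (ψ j / ψ k)) ∈ sloccCone ψ := by
  have hpow : ∀ i : Fin N, (ε ^ (d i - 1)) ≠ 0 := fun i => pow_ne_zero _ hε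
  have hdet : ∀ i : Fin N,
      (Matrix.diagonal (fun m : Fin (d i) =>
        if m = k i then (ε ^ (d i - 1))⁻¹ else ε)).det = 1 := by
    intro i
    rw [Matrix.det_diagonal,
      ← Finset.mul_prod_erase _ _ (Finset.mem_univ (k i))]
    rw [if_pos rfl]
    have : ∀ m ∈ Finset.univ.erase (k i),
        (if m = k i then (ε ^ (d i - 1))⁻¹ else ε) = ε := by
      intro m hm
      rw [if_neg (Finset.ne_of_mem_erase hm)]
    rw [Finset.prod_congr rfl this, Finset.prod_const,
      Finset.card_erase_of_mem (Finset.mem_univ _), Finset.card_univ,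
      Fintype.card_fin]
    exact inv_mul_cancel₀ (hpow i)
  refine ⟨(∏ i, ε ^ (d i - 1)) / ψ k,
    fun i => ⟨Matrix.diagonal (fun m : Fin (d i) =>
      if m = k i then (ε ^ (d i - 1))⁻¹ else ε), hdet i⟩, ?_⟩
  funext j
  have hact : sloccAct (fun i => ⟨Matrix.diagonal (fun m : Fin (d i) =>
      if m = k i then (ε ^ (d i - 1))⁻¹ else ε), hdet i⟩) ψ j
      = (∏ i, if j i = k i then (ε ^ (d i - 1))⁻¹ else ε) * ψ j := by
    unfold sloccAct
    rw [Finset.sum_eq_single j]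
    · congr 1
      exact Finset.prod_congr rfl fun i _ => Matrix.diagonal_apply_eq _ _
    · intro m _ hm
      obtain ⟨i, hi⟩ := Function.ne_iff.mp hm
      have : (Matrix.diagonal (fun m : Fin (d i) =>
          if m = k i then (ε ^ (d i - 1))⁻¹ else ε)) (j i) (m i) = 0 :=
        Matrix.diagonal_apply_ne _ (Ne.symm hi)
      rw [Finset.prod_eq_zero (Finset.mem_univ i) this, zero_mul]
    · intro h; exact absurd (Finset.mem_univ j) h
  simp only [Pi.smul_apply, smul_eq_mul, hact]
  rw [div_mul_eq_mul_div, ← mul_assoc, ← Finset.prod_mul_distrib]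
  have : ∀ i : Fin N, ε ^ (d i - 1) * (if j i = k i then (ε ^ (d i - 1))⁻¹ else ε)
      = ε ^ (if j i = k i then 0 else d i) := by
    intro i
    by_cases h : j i = k i
    · rw [if_pos h, if_pos h, mul_inv_cancel₀ (hpow i), pow_zero]
    · rw [if_neg h, if_neg h, ← pow_succ]
      congr 1
      have h1 : 1 ≤ d i := Nat.one_le_iff_ne_zero.mpr (by
        intro h0
        have := j i
        rw [h0] at this
        exact this.elim0)
      omega
  rw [Finset.prod_congr rfl fun i _ => this i, Finset.prod_pow_eq_pow_sum,
    mul_div_assoc]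


/-- For a normalized free state `ψ` and any `k` in its support, the standard basis
state `e_k` lies in the closure of the SLOCC cone of `ψ`. -/
theorem basis_mem_closure_sloccCone {N : ℕ} {d : Fin N → ℕ} (hd : ∀ i, 1 ≤ d i)
    (ψ : (∀ i, Fin (d i)) → ℂ)
    (hnorm : ∑ j : ∀ i, Fin (d i), ‖ψ j‖ ^ 2 = 1)
    (hfree : IsFree ψ) (k : ∀ i, Fin (d i)) (hk : ψ k ≠ 0) :
    (fun j => if j = k then (1 : ℂ) else 0) ∈ closure (sloccCone ψ) := by
  set E : (∀ i, Fin (d i)) → ℕ := fun j => ∑ i, if j i = k i then 0 else d i with hE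
  set F : ℕ → ((∀ i, Fin (d i)) → ℂ) :=
    fun n j => (((n : ℂ) + 1)⁻¹) ^ (E j) * (ψ j / ψ k) with hF
  have hne : ∀ n : ℕ, ((n : ℂ) + 1)⁻¹ ≠ 0 := by
    intro n
    exact inv_ne_zero (Nat.cast_add_one_ne_zero n)
  have hmem : ∀ n, F n ∈ sloccCone ψ := fun n => aux_mem ψ k _ (hne n)
  have htend : Filter.Tendsto F Filter.atTop
      (nhds (fun j => if j = k then (1 : ℂ) else 0)) := by
    rw [tendsto_pi_nhds]
    intro j
    by_cases hj : j = k
    · subst hj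
      have hEk : E j = 0 := by simp [hE]
      simp only [hF, hEk, pow_zero, one_mul, div_self hk, if_pos rfl]
      exact tendsto_const_nhds
    · rw [if_neg hj]
      have hEj : E j ≠ 0 := by
        obtain ⟨i, hi⟩ := Function.ne_iff.mp hj
        intro h0
        rw [hE] at h0
        have := (Finset.sum_eq_zero_iff).mp h0 i (Finset.mem_univ i)
        rw [if_neg hi] at this
        exact absurd this (Nat.one_le_iff_ne_zero.mp (hd i))
      have h1 : Filter.Tendsto (fun n : ℕ => ((n : ℂ) + 1)⁻¹) Filter.atTop (nhds 0) := by
        have := Filter.Tendsto.comp (Complex.continuous_ofReal.tendsto 0)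
          (tendsto_one_div_add_atTop_nhds_zero_nat)
        simp only [Function.comp_def, one_div] at this
        convert this using 2 with n
        push_cast
        ring
        simp
      have h2 := (h1.pow (E j)).mul_const (ψ j / ψ k)
      rw [zero_pow hEj, zero_mul] at h2
      exact h2
  exact mem_closure_of_tendsto htend (Filter.Eventually.of_forall hmem)
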